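/- Let X ∈ B(E,F) be nonzero with generalized inverse X⁺. Then B(E,F) = M(X) ⊕ E_X, where M(X) = {T : T N(X) ⊆ R(X)} and E_X = { T ∈ B(E,F) : R(T) ⊆ N(X⁺) and N(T) ⊇ R(X⁺) }; that is, E_X is a complement of M(X) in B(E,F). -/

import Mathlib

/-- The subspace `M(X) = {T : T (N(X)) ⊆ R(X)}` of `B(E,F)`. -/
def MX {E F : Type*} [NormedAddCommGroup E] [NormedSpace ℝ E]
    [NormedAddCommGroup F] [NormedSpace ℝ F]
    (X : E →L[ℝ] F) : Submodule ℝ (E →L[ℝ] F) where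
  carrier := {T | ∀ e ∈ LinearMap.ker (X : E →ₗ[ℝ] F), T e ∈ LinearMap.range (X : E →ₗ[ℝ] F)}
  add_mem' := fun ha hb e he => by
    simpa using add_mem (ha e he) (hb e he)
  zero_mem' := fun e _ => by simp
  smul_mem' := fun c _ ha e he => by
    simpa using Submodule.smul_mem _ c (ha e he)

/-- The subspace `E_X = {T : R(T) ⊆ N(X⁺), N(T) ⊇ R(X⁺)}` of `B(E,F)`. -/
def EX {E F : Type*} [NormedAddCommGroup E] [NormedSpace ℝ E]
    [NormedAddCommGroup F] [NormedSpace ℝ F]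
    (Xp : F →L[ℝ] E) : Submodule ℝ (E →L[ℝ] F) where
  carrier := {T | (∀ x : E, T x ∈ LinearMap.ker (Xp : F →ₗ[ℝ] E)) ∧ ∀ y : F, T (Xp y) = 0}
  add_mem' := fun ha hb => by
    refine ⟨fun x => ?_, fun y => ?_⟩
    · simpa using add_mem (ha.1 x) (hb.1 x)
    · simp [ha.2 y, hb.2 y]
  zero_mem' := ⟨fun x => by simp, fun y => by simp⟩
  smul_mem' := fun c _ ha => by
    refine ⟨fun x => ?_, fun y => ?_⟩
    · simpa using Submodule.smul_mem _ c (ha.1 x)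
    · simp [ha.2 y]

theorem stmt_14 {E F : Type*} [NormedAddCommGroup E] [NormedSpace ℝ E] [CompleteSpace E]
    [NormedAddCommGroup F] [NormedSpace ℝ F] [CompleteSpace F]
    (X : E →L[ℝ] F) (Xp : F →L[ℝ] E) (hX : X ≠ 0)
    (h1 : X ∘L Xp ∘L X = X) (h2 : Xp ∘L X ∘L Xp = Xp) :
    IsCompl (MX X) (EX Xp) := by

  have key1 : ∀ y, Xp (y - X (Xp y)) = 0 := by
    intro y
    have := congrArg (fun f : F →L[ℝ] E => f y) h2
    simp at this
    simp [map_sub, this]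
  have key2 : ∀ e, X (e - Xp (X e)) = 0 := by
    intro e
    have := congrArg (fun f : E →L[ℝ] F => f e) h1
    simp at this
    simp [map_sub, this]
  constructor
  · -- disjoint
    rw [Submodule.disjoint_def]
    intro T hM hE
    ext e
    have h3 : e - Xp (X e) ∈ LinearMap.ker (X : E →ₗ[ℝ] F) := by
      simpa [LinearMap.mem_ker] using key2 e
    obtain ⟨u, hu⟩ := hM _ h3
    have hTe : T e = X u := by
      have := hE.2 (X e)
      have : T e = T (e - Xp (X e)) := by
        rw [map_sub, this, sub_zero]
      rw [this, ← hu]; rfl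
    have hXpTe : Xp (T e) = 0 := hE.1 e
    have : X u = 0 := by
      have hXpXu : Xp (X u) = 0 := by rw [← hTe]; exact hXpTe
      have := congrArg (fun f : E →L[ℝ] F => f u) h1
      simp at this
      rw [← this, hXpXu, map_zero]
    simp [hTe, this]
  · -- codisjoint
    rw [codisjoint_iff, eq_top_iff]
    intro T _
    set B : E →L[ℝ] F := T - X ∘L Xp ∘L T - (T - X ∘L Xp ∘L T) ∘L (Xp ∘L X) with hB
    have hBmem : B ∈ EX Xp := by
      constructor
      · intro x
        have := congrArg (fun f : F →L[ℝ] E => f (T x - X (Xp (T x)))) h2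
        simp only [LinearMap.mem_ker, hB]
        have h2' : ∀ z, Xp (X (Xp z)) = Xp z := fun z => by simpa using congrArg (fun f : F →L[ℝ] E => f z) h2
        simp [map_sub, key1, h2']
      · intro y
        have := congrArg (fun f : F →L[ℝ] E => f y) h2
        simp at this
        simp [hB, map_sub, this]
    have hAmem : T - B ∈ MX X := by
      intro e he
      have hXe : X e = 0 := he
      have : (T - B) e = X (Xp (T e)) := by
        simp [hB, map_sub, hXe]
      rw [this]
      exact ⟨Xp (T e), rfl⟩
    have : T = (T - B) + B := by abel
    rw [this]
    exact Submodule.add_mem_sup hAmem hBmem
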